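/- Let m₁ be a positive integer, λ > 0, C > 0, z > 0, α₂ > 0, μ₂ > 0 and Ῡ > 0. Let γ₁ and γ₂ be independent random variables, where γ₁ has the Gamma(m₁, λ) density and γ₂ has the α-μ density with parameters (α₂, μ₂, Ῡ), with density f₂. Then P( γ₁γ₂/(γ₂ + C) ≤ z ) = 1 − e^{−λz} · Σ_{n=0}^{m₁−1} (1/n!) Σ_{p=0}^{n} C(n,p) (λz)^{n−p} (λCz)^{p} ∫_0^∞ x^{−p} e^{−λCz/x} f₂(x) dx, where C(n,p) denotes the binomial coefficient. -/

import Mathlib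

open MeasureTheory ProbabilityTheory

private lemma hasDerivAt_expSum (lam : ℝ) (m : ℕ) (t : ℝ) :
    HasDerivAt (fun t : ℝ => ∑ n ∈ Finset.range (m + 1), (lam * t) ^ n / n.factorial)
      (lam * ∑ n ∈ Finset.range m, (lam * t) ^ n / n.factorial) t := by
  induction m with
  | zero =>
    have h : (fun t : ℝ => ∑ n ∈ Finset.range 1, (lam * t) ^ n / n.factorial)
        = fun _ : ℝ => (1 : ℝ) := by funext x; simp
    rw [h]
    simpa using hasDerivAt_const t (1 : ℝ)
  | succ k ih =>
    have hlin : HasDerivAt (fun t : ℝ => lam * t) lam t := by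
      simpa using (hasDerivAt_id t).const_mul lam
    have hpow : HasDerivAt (fun t : ℝ => (lam * t) ^ (k + 1))
        (((k : ℝ) + 1) * (lam * t) ^ k * lam) t := by
      have := hlin.pow (k + 1)
      refine this.congr_deriv ?_
      simp
    have hterm : HasDerivAt (fun t : ℝ => (lam * t) ^ (k + 1) / (k + 1).factorial)
        (lam * ((lam * t) ^ k / k.factorial)) t := by
      have := hpow.div_const ((k + 1).factorial : ℝ)
      refine this.congr_deriv ?_
      rw [Nat.factorial_succ]
      have hk : (k.factorial : ℝ) ≠ 0 := Nat.cast_ne_zero.mpr k.factorial_ne_zero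
      push_cast
      field_simp
    have := ih.add hterm
    have hfun : (fun t : ℝ => ∑ n ∈ Finset.range (k + 1 + 1), (lam * t) ^ n / n.factorial)
        = fun t : ℝ => (∑ n ∈ Finset.range (k + 1), (lam * t) ^ n / n.factorial)
            + (lam * t) ^ (k + 1) / (k + 1).factorial := by
      funext x; rw [Finset.sum_range_succ]
    rw [hfun, Finset.sum_range_succ, mul_add]
    exact this

private lemma gamma_cdf (lam : ℝ) (m : ℕ) (t : ℝ) (ht : 0 ≤ t) :
    ∫ x in Set.Ioc (0 : ℝ) t, lam ^ (m + 1) * x ^ m * Real.exp (-lam * x) / m.factorial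
      = 1 - Real.exp (-lam * t) * ∑ n ∈ Finset.range (m + 1), (lam * t) ^ n / n.factorial := by
  set F : ℝ → ℝ := fun t => 1 - Real.exp (-lam * t) * ∑ n ∈ Finset.range (m + 1),
    (lam * t) ^ n / n.factorial with hF
  have hderiv : ∀ x ∈ Set.uIcc (0 : ℝ) t, HasDerivAt F
      (lam ^ (m + 1) * x ^ m * Real.exp (-lam * x) / m.factorial) x := by
    intro x _
    have hexp : HasDerivAt (fun x : ℝ => Real.exp (-lam * x))
        (Real.exp (-lam * x) * (-lam)) x := by
      have h1 : HasDerivAt (fun x : ℝ => -lam * x) (-lam) x := by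
        simpa using (hasDerivAt_id x).const_mul (-lam)
      exact h1.exp
    have hS := hasDerivAt_expSum lam m x
    have hmul := hexp.mul hS
    have := hmul.const_sub 1
    refine this.congr_deriv ?_
    have hsplit : (∑ n ∈ Finset.range (m + 1), (lam * x) ^ n / n.factorial)
        = (∑ n ∈ Finset.range m, (lam * x) ^ n / n.factorial) + (lam * x) ^ m / m.factorial :=
      Finset.sum_range_succ _ _
    rw [hsplit]
    rw [mul_pow]
    ring
  have hcont : Continuous fun x : ℝ =>
      lam ^ (m + 1) * x ^ m * Real.exp (-lam * x) / m.factorial := by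
    continuity
  have hint : IntervalIntegrable
      (fun x : ℝ => lam ^ (m + 1) * x ^ m * Real.exp (-lam * x) / m.factorial)
      volume 0 t := hcont.intervalIntegrable 0 t
  have := intervalIntegral.integral_eq_sub_of_hasDerivAt hderiv hint
  rw [intervalIntegral.integral_of_le ht] at this
  rw [this]
  have hF0 : F 0 = 0 := by
    simp only [hF, mul_zero, Real.exp_zero, one_mul]
    have : (∑ n ∈ Finset.range (m + 1), (0:ℝ) ^ n / (n.factorial : ℝ)) = 1 := by
      rw [Finset.sum_range_succ']
      simp
    rw [this]; ring
  rw [hF0]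
  simp [hF]

private lemma rpow_exp_bound (c : ℝ) (hc : 0 < c) (p : ℕ) {y : ℝ} (hy : 0 < y) :
    y ^ (-(p : ℝ)) * Real.exp (-c / y) ≤ p.factorial / c ^ p := by
  have h1 : y ^ (-(p : ℝ)) = (1 / y) ^ p := by
    rw [Real.rpow_neg hy.le, Real.rpow_natCast, one_div, inv_pow]
  set u : ℝ := 1 / y with hu
  have hupos : 0 < u := by positivity
  have hcy : -c / y = -(c * u) := by rw [hu]; field_simp
  rw [h1, hcy]
  have h2 : (c * u) ^ p / p.factorial ≤ Real.exp (c * u) := by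
    refine le_trans ?_ (Real.sum_le_exp_of_nonneg (by positivity) (p + 1))
    exact Finset.single_le_sum (f := fun i => (c * u) ^ i / i.factorial)
      (fun i _ => by positivity) (Finset.self_mem_range_succ p)
  have h3 : c ^ p * u ^ p ≤ p.factorial * Real.exp (c * u) := by
    rw [← mul_pow]
    rw [div_le_iff₀ (by positivity : (0:ℝ) < p.factorial)] at h2
    linarith [h2]
  have hepos : (0:ℝ) < Real.exp (c * u) := Real.exp_pos _
  rw [Real.exp_neg, le_div_iff₀ (by positivity : (0:ℝ) < c ^ p)]
  rw [mul_comm (u ^ p) (Real.exp (c * u))⁻¹, mul_assoc, inv_mul_le_iff₀ hepos]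
  nlinarith [h3]

private lemma nu1_Iic (lam : ℝ) (hlam : 0 < lam) (m : ℕ) (t : ℝ) (ht : 0 ≤ t) :
    (volume.withDensity fun x => ENNReal.ofReal
        (if 0 < x then lam ^ (m + 1) * x ^ (m + 1 - 1) * Real.exp (-lam * x)
            / Real.Gamma ((m + 1 : ℕ) : ℝ) else 0)) (Set.Iic t)
      = ENNReal.ofReal (1 - Real.exp (-lam * t)
          * ∑ n ∈ Finset.range (m + 1), (lam * t) ^ n / n.factorial) := by
  have hGamma : Real.Gamma ((m + 1 : ℕ) : ℝ) = m.factorial := by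
    push_cast
    exact Real.Gamma_nat_eq_factorial m
  rw [withDensity_apply _ measurableSet_Iic]
  have hsplit : Set.Iic t = Set.Iic 0 ∪ Set.Ioc 0 t := (Set.Iic_union_Ioc_eq_Iic ht).symm
  rw [hsplit, lintegral_union measurableSet_Ioc (Set.Iic_disjoint_Ioc le_rfl)]
  have hzero : ∫⁻ x in Set.Iic (0:ℝ), ENNReal.ofReal
      (if 0 < x then lam ^ (m + 1) * x ^ (m + 1 - 1) * Real.exp (-lam * x)
          / Real.Gamma ((m + 1 : ℕ) : ℝ) else 0) = 0 := by
    rw [setLIntegral_congr_fun measurableSet_Iic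
      (fun x hx => by
        rw [if_neg (not_lt.mpr hx), ENNReal.ofReal_zero])]
    simp
  rw [hzero, zero_add]
  have hcong : ∫⁻ x in Set.Ioc (0:ℝ) t, ENNReal.ofReal
      (if 0 < x then lam ^ (m + 1) * x ^ (m + 1 - 1) * Real.exp (-lam * x)
          / Real.Gamma ((m + 1 : ℕ) : ℝ) else 0)
      = ∫⁻ x in Set.Ioc (0:ℝ) t, ENNReal.ofReal
        (lam ^ (m + 1) * x ^ m * Real.exp (-lam * x) / m.factorial) := by
    refine setLIntegral_congr_fun measurableSet_Ioc (fun x hx => ?_)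
    rw [if_pos hx.1, hGamma]
    norm_num
  rw [hcong]
  rw [← ofReal_integral_eq_lintegral_ofReal]
  · rw [gamma_cdf lam m t ht]
  · exact (by continuity : Continuous fun x : ℝ =>
      lam ^ (m + 1) * x ^ m * Real.exp (-lam * x) / m.factorial).integrableOn_Ioc
  · filter_upwards [ae_restrict_mem measurableSet_Ioc] with x hx
    have : (0:ℝ) < x := hx.1
    positivity

/-- Exact CDF of the end-to-end SNR `γ₁ γ₂ / (γ₂ + C)` when `γ₁` is
`Gamma (m₁, lam)` with integer shape `m₁` and `γ₂` is `α`-`μ` distributed with density `f₂`. -/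
theorem cdf_end_to_end_battery_case {Θ : Type*} [MeasureSpace Θ]
    [IsProbabilityMeasure (ℙ : Measure Θ)]
    (m₁ : ℕ) (hm₁ : 0 < m₁) (lam C z α₂ μ₂ Υb : ℝ)
    (hlam : 0 < lam) (hC : 0 < C) (hz : 0 < z)
    (hα₂ : 0 < α₂) (hμ₂ : 0 < μ₂) (hΥb : 0 < Υb)
    (γ₁ γ₂ : Θ → ℝ) (hγ₁m : Measurable γ₁) (hγ₂m : Measurable γ₂)
    (hindep : IndepFun γ₁ γ₂ ℙ)
    (hγ₁ : Measure.map γ₁ ℙ = volume.withDensity fun x => ENNReal.ofReal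
      (if 0 < x then lam ^ m₁ * x ^ (m₁ - 1) * Real.exp (-lam * x) / Real.Gamma (m₁ : ℝ)
       else 0))
    (f₂ : ℝ → ℝ)
    (hf₂ : ∀ x : ℝ, f₂ x = if 0 < x then
        α₂ * μ₂ ^ μ₂ / (2 * Real.Gamma μ₂ * Υb) * (x / Υb) ^ (α₂ * μ₂ / 2 - 1)
          * Real.exp (-μ₂ * (x / Υb) ^ (α₂ / 2)) else 0)
    (hγ₂ : Measure.map γ₂ ℙ = volume.withDensity fun x => ENNReal.ofReal (f₂ x)) :
    (ℙ {ω | γ₁ ω * γ₂ ω / (γ₂ ω + C) ≤ z}).toReal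
      = 1 - Real.exp (-lam * z) * ∑ n ∈ Finset.range m₁, (1 / (n.factorial : ℝ)) *
          ∑ p ∈ Finset.range (n + 1),
            (n.choose p : ℝ) * (lam * z) ^ (n - p) * (lam * C * z) ^ p *
              ∫ x in Set.Ioi (0 : ℝ),
                x ^ (-(p : ℝ)) * Real.exp (-(lam * C * z) / x) * f₂ x := by
  obtain ⟨m, rfl⟩ : ∃ m, m₁ = m + 1 := ⟨m₁ - 1, (Nat.succ_pred_eq_of_pos hm₁).symm⟩
  set c : ℝ := lam * C * z with hc
  have hcpos : 0 < c := by positivity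
  -- basic facts about f₂
  have hf₂nn : ∀ x, 0 ≤ f₂ x := by
    intro x
    rw [hf₂ x]
    split_ifs with hx
    · have h1 : 0 < Real.Gamma μ₂ := Real.Gamma_pos_of_pos hμ₂
      have h2 : (0:ℝ) < x / Υb := by positivity
      positivity
    · exact le_rfl
  have hf₂meas : Measurable f₂ := by
    have : f₂ = fun x => if 0 < x then
        α₂ * μ₂ ^ μ₂ / (2 * Real.Gamma μ₂ * Υb) * (x / Υb) ^ (α₂ * μ₂ / 2 - 1)
          * Real.exp (-μ₂ * (x / Υb) ^ (α₂ / 2)) else 0 := funext hf₂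
    rw [this]
    refine Measurable.ite measurableSet_Ioi ?_ measurable_const
    fun_prop
  have hf₂zero : ∀ x : ℝ, x ∉ Set.Ioi (0:ℝ) → f₂ x = 0 := by
    intro x hx
    rw [hf₂ x, if_neg (by simpa using hx)]
  -- γ₂'s law is a probability measure: total mass of f₂ is 1
  haveI hpm2 : IsProbabilityMeasure (Measure.map γ₂ ℙ) :=
    Measure.isProbabilityMeasure_map hγ₂m.aemeasurable
  haveI hpm1 : IsProbabilityMeasure (Measure.map γ₁ ℙ) :=
    Measure.isProbabilityMeasure_map hγ₁m.aemeasurable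
  have hlint_f₂ : ∫⁻ x, ENNReal.ofReal (f₂ x) = 1 := by
    have := hpm2.measure_univ
    rw [hγ₂, withDensity_apply _ MeasurableSet.univ, Measure.restrict_univ] at this
    exact this
  have hf₂int : Integrable f₂ (volume : Measure ℝ) := by
    refine ⟨hf₂meas.aestronglyMeasurable, ?_⟩
    rw [hasFiniteIntegral_iff_ofReal (ae_of_all _ hf₂nn), hlint_f₂]
    exact ENNReal.one_lt_top
  have hintf₂ : ∫ x in Set.Ioi (0:ℝ), f₂ x = 1 := by
    rw [setIntegral_eq_integral_of_forall_compl_eq_zero hf₂zero]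
    rw [integral_eq_lintegral_of_nonneg_ae (ae_of_all _ hf₂nn) hf₂meas.aestronglyMeasurable,
      hlint_f₂, ENNReal.toReal_one]
  -- integrability of the summand functions
  have hgmeas : ∀ p : ℕ, Measurable fun y : ℝ =>
      y ^ (-(p : ℝ)) * Real.exp (-c / y) * f₂ y := by
    intro p
    exact (by fun_prop : Measurable fun y : ℝ =>
      y ^ (-(p : ℝ)) * Real.exp (-c / y)).mul hf₂meas
  have hgint : ∀ p : ℕ, IntegrableOn (fun y : ℝ =>
      y ^ (-(p : ℝ)) * Real.exp (-c / y) * f₂ y) (Set.Ioi 0) volume := by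
    intro p
    refine Integrable.mono' ((hf₂int.restrict).const_mul ((p.factorial : ℝ) / c ^ p))
      ((hgmeas p).aestronglyMeasurable.restrict) ?_
    filter_upwards [ae_restrict_mem measurableSet_Ioi] with y hy
    have hy' : (0:ℝ) < y := hy
    have hb := rpow_exp_bound c hcpos p hy'
    have h1 : 0 ≤ y ^ (-(p : ℝ)) * Real.exp (-c / y) := by positivity
    rw [Real.norm_eq_abs, abs_of_nonneg (mul_nonneg h1 (hf₂nn y))]
    exact mul_le_mul_of_nonneg_right hb (hf₂nn y)
  -- Step A: express the probability through the product measure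
  have hpair : Measure.map (fun ω => (γ₁ ω, γ₂ ω)) ℙ
      = (Measure.map γ₁ ℙ).prod (Measure.map γ₂ ℙ) :=
    (indepFun_iff_map_prod_eq_prod_map_map hγ₁m.aemeasurable hγ₂m.aemeasurable).mp hindep
  have hSmeas : MeasurableSet {p : ℝ × ℝ | p.1 * p.2 / (p.2 + C) ≤ z} := by
    exact measurableSet_le ((measurable_fst.mul measurable_snd).div
      (measurable_snd.add_const C)) measurable_const
  have hA : ℙ {ω | γ₁ ω * γ₂ ω / (γ₂ ω + C) ≤ z}
      = ∫⁻ y, (Measure.map γ₁ ℙ)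
          ((fun x => (x, y)) ⁻¹' {p : ℝ × ℝ | p.1 * p.2 / (p.2 + C) ≤ z})
          ∂(Measure.map γ₂ ℙ) := by
    have hpre : {ω | γ₁ ω * γ₂ ω / (γ₂ ω + C) ≤ z}
        = (fun ω => (γ₁ ω, γ₂ ω)) ⁻¹' {p : ℝ × ℝ | p.1 * p.2 / (p.2 + C) ≤ z} := rfl
    rw [hpre, ← Measure.map_apply (hγ₁m.prodMk hγ₂m) hSmeas, hpair,
      Measure.prod_apply_symm hSmeas]
  -- the function W
  set W : ℝ → ℝ := fun y => f₂ y * (1 - Real.exp (-lam * (z * (y + C) / y))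
      * ∑ n ∈ Finset.range (m + 1), (lam * (z * (y + C) / y)) ^ n / n.factorial) with hWdef
  have hgm : Measurable fun y : ℝ => (Measure.map γ₁ ℙ)
      ((fun x => (x, y)) ⁻¹' {p : ℝ × ℝ | p.1 * p.2 / (p.2 + C) ≤ z}) :=
    measurable_measure_prodMk_right hSmeas
  have hsec : ∀ y : ℝ, 0 < y →
      ((fun x => (x, y)) ⁻¹' {p : ℝ × ℝ | p.1 * p.2 / (p.2 + C) ≤ z})
        = Set.Iic (z * (y + C) / y) := by
    intro y hy
    ext a
    simp only [Set.mem_preimage, Set.mem_setOf_eq, Set.mem_Iic]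
    rw [div_le_iff₀ (by positivity : (0:ℝ) < y + C), le_div_iff₀ hy]
  have hgval : ∀ y : ℝ, 0 < y → (Measure.map γ₁ ℙ)
      ((fun x => (x, y)) ⁻¹' {p : ℝ × ℝ | p.1 * p.2 / (p.2 + C) ≤ z})
      = ENNReal.ofReal (1 - Real.exp (-lam * (z * (y + C) / y))
          * ∑ n ∈ Finset.range (m + 1), (lam * (z * (y + C) / y)) ^ n / n.factorial) := by
    intro y hy
    rw [hsec y hy, hγ₁]
    exact nu1_Iic lam hlam m _ (le_of_lt (by positivity))
  have hB : ℙ {ω | γ₁ ω * γ₂ ω / (γ₂ ω + C) ≤ z}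
      = ∫⁻ y in Set.Ioi (0:ℝ), ENNReal.ofReal (W y) := by
    rw [hA, hγ₂, lintegral_withDensity_eq_lintegral_mul _ hf₂meas.ennreal_ofReal hgm]
    have h1 : ((fun x => ENNReal.ofReal (f₂ x)) * fun y => (Measure.map γ₁ ℙ)
        ((fun x => (x, y)) ⁻¹' {p : ℝ × ℝ | p.1 * p.2 / (p.2 + C) ≤ z}))
        = Set.indicator (Set.Ioi 0) (fun y => ENNReal.ofReal (W y)) := by
      funext y
      by_cases hy : 0 < y
      · have hy2 : y ∈ Set.Ioi (0:ℝ) := hy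
        rw [Set.indicator_of_mem hy2, Pi.mul_apply, hgval y hy, hWdef,
          ← ENNReal.ofReal_mul (hf₂nn y)]
      · have hy2 : y ∉ Set.Ioi (0:ℝ) := by simpa using hy
        rw [Set.indicator_of_notMem hy2, Pi.mul_apply]
        rw [hf₂ y, if_neg hy]
        simp
    rw [h1]
    exact lintegral_indicator measurableSet_Ioi _
  -- nonnegativity of the CDF factor
  have hcdf_nn : ∀ t : ℝ, 0 ≤ t →
      0 ≤ 1 - Real.exp (-lam * t) * ∑ n ∈ Finset.range (m + 1),
        (lam * t) ^ n / n.factorial := by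
    intro t ht
    rw [← gamma_cdf lam m t ht]
    refine setIntegral_nonneg measurableSet_Ioc fun x hx => ?_
    have hx0 : (0:ℝ) < x := hx.1
    positivity
  have hWnn : ∀ y ∈ Set.Ioi (0:ℝ), 0 ≤ W y := by
    intro y hy
    have hy' : (0:ℝ) < y := hy
    exact mul_nonneg (hf₂nn y) (hcdf_nn _ (le_of_lt (by positivity)))
  have hWmeas : Measurable W := by
    apply hf₂meas.mul
    apply Measurable.const_sub
    apply Measurable.mul
    · fun_prop
    · apply Finset.measurable_sum
      intro n _
      fun_prop
  -- Step E : pass to real integrals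
  have hE : (ℙ {ω | γ₁ ω * γ₂ ω / (γ₂ ω + C) ≤ z}).toReal
      = ∫ y in Set.Ioi (0:ℝ), W y := by
    rw [hB, integral_eq_lintegral_of_nonneg_ae ?_ (hWmeas.aestronglyMeasurable.restrict)]
    · filter_upwards [ae_restrict_mem measurableSet_Ioi] with y hy
      exact hWnn y hy
  -- Step F : pointwise expansion
  have key : Set.EqOn W (fun y => f₂ y - ∑ n ∈ Finset.range (m + 1),
      ∑ p ∈ Finset.range (n + 1),
        (Real.exp (-lam * z) * (1 / (n.factorial : ℝ))
            * ((n.choose p : ℝ) * (lam * z) ^ (n - p) * c ^ p))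
          * (y ^ (-(p : ℝ)) * Real.exp (-c / y) * f₂ y)) (Set.Ioi 0) := by
    intro y hy
    have hy' : (0:ℝ) < y := hy
    have hexp : Real.exp (-lam * (z * (y + C) / y))
        = Real.exp (-lam * z) * Real.exp (-c / y) := by
      rw [← Real.exp_add]
      congr 1
      field_simp
      ring
    have hpow : ∀ n : ℕ, (lam * (z * (y + C) / y)) ^ n
        = ∑ p ∈ Finset.range (n + 1),
            (n.choose p : ℝ) * (lam * z) ^ (n - p) * (c ^ p * y ^ (-(p : ℝ))) := by
      intro n
      have hb : lam * (z * (y + C) / y) = c / y + lam * z := by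
        field_simp
        ring
      rw [hb, add_pow]
      refine Finset.sum_congr rfl fun p hp => ?_
      have hcy : (c / y) ^ p = c ^ p * y ^ (-(p : ℝ)) := by
        rw [div_pow, Real.rpow_neg hy'.le, Real.rpow_natCast, div_eq_mul_inv]
      rw [hcy]
      ring
    simp only [hWdef]
    rw [hexp]
    have hsum : (∑ n ∈ Finset.range (m + 1),
        (lam * (z * (y + C) / y)) ^ n / n.factorial)
        = ∑ n ∈ Finset.range (m + 1), (∑ p ∈ Finset.range (n + 1),
            (n.choose p : ℝ) * (lam * z) ^ (n - p) * (c ^ p * y ^ (-(p : ℝ)))) / n.factorial := by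
      refine Finset.sum_congr rfl fun n _ => ?_
      rw [hpow n]
    rw [hsum, mul_sub, mul_one]
    congr 1
    rw [Finset.mul_sum, Finset.mul_sum]
    refine Finset.sum_congr rfl fun n _ => ?_
    rw [Finset.sum_div, Finset.mul_sum, Finset.mul_sum]
    refine Finset.sum_congr rfl fun p _ => ?_
    ring
  rw [hE, setIntegral_congr_fun measurableSet_Ioi key]
  have hinner : ∀ n ∈ Finset.range (m + 1), Integrable (fun y => ∑ p ∈ Finset.range (n + 1),
      (Real.exp (-lam * z) * (1 / (n.factorial : ℝ))
          * ((n.choose p : ℝ) * (lam * z) ^ (n - p) * c ^ p))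
        * (y ^ (-(p : ℝ)) * Real.exp (-c / y) * f₂ y))
      (volume.restrict (Set.Ioi 0)) := by
    intro n _
    exact integrable_finset_sum _ fun p _ => (hgint p).const_mul _
  have hsum_int : Integrable (fun y => ∑ n ∈ Finset.range (m + 1),
      ∑ p ∈ Finset.range (n + 1),
        (Real.exp (-lam * z) * (1 / (n.factorial : ℝ))
            * ((n.choose p : ℝ) * (lam * z) ^ (n - p) * c ^ p))
          * (y ^ (-(p : ℝ)) * Real.exp (-c / y) * f₂ y))
      (volume.restrict (Set.Ioi 0)) := integrable_finset_sum _ hinner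
  rw [integral_sub hf₂int.restrict hsum_int, hintf₂,
    integral_finset_sum _ hinner]
  have hswap : ∀ n ∈ Finset.range (m + 1), (∫ y in Set.Ioi (0:ℝ),
      ∑ p ∈ Finset.range (n + 1),
        (Real.exp (-lam * z) * (1 / (n.factorial : ℝ))
            * ((n.choose p : ℝ) * (lam * z) ^ (n - p) * c ^ p))
          * (y ^ (-(p : ℝ)) * Real.exp (-c / y) * f₂ y))
      = ∑ p ∈ Finset.range (n + 1),
        (Real.exp (-lam * z) * (1 / (n.factorial : ℝ))
            * ((n.choose p : ℝ) * (lam * z) ^ (n - p) * c ^ p))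
          * ∫ y in Set.Ioi (0:ℝ), y ^ (-(p : ℝ)) * Real.exp (-c / y) * f₂ y := by
    intro n _
    rw [integral_finset_sum _ fun p _ => (hgint p).const_mul _]
    exact Finset.sum_congr rfl fun p _ => MeasureTheory.integral_const_mul _ _
  rw [Finset.sum_congr rfl hswap]
  congr 1
  rw [Finset.mul_sum]
  refine Finset.sum_congr rfl fun n _ => ?_
  rw [Finset.mul_sum, Finset.mul_sum]
  refine Finset.sum_congr rfl fun p _ => ?_
  ring
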